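/- Let T be a minimal continuous map on a compact metrizable space X and let f : X → ℝ be continuous. If there exist x₀ ∈ X and M ∈ ℝ such that |∑_{i=0}^{n} f(Tⁱ x₀)| ≤ M for all n ∈ ℕ, then there exists a continuous function g : X → ℝ such that f(x) = g(x) - g(T x) for all x ∈ X (Gottschalk–Hedlund theorem). -/

import Mathlib

open Set Function

/-- Gottschalk–Hedlund theorem: if `T` is a minimal continuous map on a nonempty compact
metrizable space and the Birkhoff sums of a continuous `f : X → ℝ` are bounded at some
point `x₀`, then `f` is a continuous coboundary. -/
theorem gottschalk_hedlund
    {X : Type*} [MetricSpace X] [CompactSpace X] [Nonempty X]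
    (T : X → X) (hT : Continuous T)
    (hmin : ∀ x : X, Dense (Set.range fun n : ℕ => T^[n] x))
    (f : X → ℝ) (hf : Continuous f)
    (h : ∃ (x₀ : X) (M : ℝ), ∀ n : ℕ,
      |∑ i ∈ Finset.range (n + 1), f (T^[i] x₀)| ≤ M) :
    ∃ g : X → ℝ, Continuous g ∧ ∀ x, f x = g x - g (T x) := by
  obtain ⟨x₀, M, hM⟩ := h
  have hM0 : 0 ≤ M := le_trans (abs_nonneg _) (hM 0)
  -- skew product
  set F : X × ℝ → X × ℝ := fun p => (T p.1, p.2 + f p.1) with hFdef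
  have hFc : Continuous F :=
    (hT.comp continuous_fst).prodMk (continuous_snd.add (hf.comp continuous_fst))
  have hfst_iter : ∀ (n : ℕ) (p : X × ℝ), (F^[n] p).1 = T^[n] p.1 := by
    intro n
    induction n with
    | zero => intro p; rfl
    | succ n ih =>
      intro p
      rw [Function.iterate_succ_apply', Function.iterate_succ_apply']
      show T (F^[n] p).1 = T (T^[n] p.1)
      rw [ih]
  have horb : ∀ n : ℕ, F^[n] (x₀, 0) = (T^[n] x₀, ∑ i ∈ Finset.range n, f (T^[i] x₀)) := by
    intro n
    induction n with
    | zero => simp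
    | succ n ih =>
      rw [Function.iterate_succ_apply', ih, Function.iterate_succ_apply']
      simp [hFdef, Finset.sum_range_succ]
  set C : Set (X × ℝ) := closure (range fun n : ℕ => F^[n] (x₀, 0)) with hCdef
  have hCbd : C ⊆ (univ : Set X) ×ˢ Icc (-M) M := by
    apply closure_minimal
    · rintro p ⟨n, rfl⟩
      show F^[n] (x₀, 0) ∈ _
      rw [horb]
      refine ⟨trivial, ?_⟩
      rcases n with _ | n
      · simp [neg_nonpos.mpr hM0, hM0]
      · exact abs_le.mp (hM n)
    · exact isClosed_univ.prod isClosed_Icc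
  have hCcomp : IsCompact C :=
    IsCompact.of_isClosed_subset (isCompact_univ.prod isCompact_Icc) isClosed_closure hCbd
  have hCinv : MapsTo F C C := by
    have himg : F '' C ⊆ C := by
      refine (image_closure_subset_closure_image hFc).trans (closure_mono ?_)
      rintro q ⟨p, ⟨n, rfl⟩, rfl⟩
      exact ⟨n + 1, show F^[n+1] (x₀, 0) = F (F^[n] (x₀, 0)) from
        Function.iterate_succ_apply' F n _⟩
    exact fun p hp => himg ⟨p, hp, rfl⟩
  -- Zorn : minimal nonempty closed invariant subset of C
  set 𝒮 : Set (Set (X × ℝ)) :=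
    {K | K ⊆ C ∧ K.Nonempty ∧ IsClosed K ∧ MapsTo F K K} with h𝒮
  have hzorn := zorn_superset_nonempty 𝒮 ?_ C
    ⟨Subset.rfl, ⟨_, subset_closure ⟨0, rfl⟩⟩, isClosed_closure, hCinv⟩
  rotate_left
  · intro c hc hchain hcne
    haveI : Nonempty c := hcne.to_subtype
    refine ⟨⋂₀ c, ⟨?_, ?_, ?_, ?_⟩, fun s hs => sInter_subset_of_mem hs⟩
    · obtain ⟨s, hs⟩ := hcne
      exact (sInter_subset_of_mem hs).trans (hc hs).1
    · apply IsCompact.nonempty_sInter_of_directed_nonempty_isCompact_isClosed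
      · intro U hU V hV
        rcases hchain.total hU hV with hUV | hVU
        · exact ⟨U, hU, Subset.rfl, hUV⟩
        · exact ⟨V, hV, hVU, Subset.rfl⟩
      · exact fun U hU => (hc hU).2.1
      · exact fun U hU => IsCompact.of_isClosed_subset hCcomp (hc hU).2.2.1 (hc hU).1
      · exact fun U hU => (hc hU).2.2.1
    · exact isClosed_sInter fun U hU => (hc hU).2.2.1
    · intro p hp U hU
      exact (hc hU).2.2.2 (hp U hU)
  obtain ⟨K, -, hKmin⟩ := hzorn
  obtain ⟨hKC, hKne, hKcl, hKinv⟩ := hKmin.prop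
  have hKcomp : IsCompact K := IsCompact.of_isClosed_subset hCcomp hKcl hKC
  -- first projection of K is all of X
  have hfst : ∀ x : X, ∃ t : ℝ, (x, t) ∈ K := by
    have hAcl : IsClosed (Prod.fst '' K) := (hKcomp.image continuous_fst).isClosed
    obtain ⟨⟨a, t⟩, hat⟩ := hKne
    have hsub : range (fun n : ℕ => T^[n] a) ⊆ Prod.fst '' K := by
      rintro x ⟨n, rfl⟩
      exact ⟨F^[n] (a, t), hKinv.iterate n hat, hfst_iter n (a, t)⟩
    have hA : Prod.fst '' K = univ := by
      rw [← hAcl.closure_eq, ((hmin a).mono hsub).closure_eq]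
    intro x
    have : x ∈ Prod.fst '' K := hA ▸ mem_univ x
    obtain ⟨p, hp, hpx⟩ := this
    exact ⟨p.2, by rwa [← hpx, Prod.mk.eta]⟩
  -- K is a graph
  have hgraph : ∀ x t s, (x, t) ∈ K → (x, s) ∈ K → t = s := by
    intro x t s ht hs
    set c := s - t with hcdef
    set τ : X × ℝ → X × ℝ := fun p => (p.1, p.2 + c) with hτ
    have hτc : Continuous τ := continuous_fst.prodMk (continuous_snd.add continuous_const)
    have hcomm : ∀ p, F (τ p) = τ (F p) := by
      intro p
      simp only [hFdef, hτ]
      exact Prod.ext rfl (by ring)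
    have hK' : K ∩ τ '' K ∈ 𝒮 := by
      refine ⟨inter_subset_left.trans hKC,
        ⟨(x, s), hs, ⟨(x, t), ht, by simp [hτ, hcdef]⟩⟩,
        hKcl.inter (hKcomp.image hτc).isClosed, ?_⟩
      rintro p ⟨hp, q, hq, rfl⟩
      exact ⟨hKinv hp, F q, hKinv hq, (hcomm q).symm⟩
    have hKeq : K ⊆ τ '' K :=
      (hKmin.2 hK' inter_subset_left).trans inter_subset_right
    have hstep : ∀ p ∈ K, (p.1, p.2 - c) ∈ K := by
      intro p hp
      obtain ⟨q, hq, hqe⟩ := hKeq hp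
      have hqe' : (q.1, q.2 + c) = (p.1, p.2) := hqe
      injection hqe' with h1 h2
      have hq' : q = (p.1, p.2 - c) := Prod.ext h1 (show q.2 = p.2 - c by linarith)
      rwa [hq'] at hq
    have hiter : ∀ n : ℕ, (x, t - n * c) ∈ K := by
      intro n
      induction n with
      | zero => simpa using ht
      | succ n ih =>
        have := hstep _ ih
        have heq : ((x, t - n * c).1, (x, t - n * c).2 - c) = (x, t - (n + 1 : ℕ) * c) := by
          refine Prod.ext rfl ?_
          push_cast
          ring
        rwa [heq] at this
    by_contra hne
    have hc0 : c ≠ 0 := sub_ne_zero.mpr fun hst => hne (hst.symm)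
    have hcpos : 0 < |c| := abs_pos.mpr hc0
    obtain ⟨n, hn⟩ := exists_nat_gt ((|t| + M) / |c|)
    have hbig : (|t| + M) < n * |c| := (div_lt_iff₀ hcpos).mp hn
    have hmem := hCbd (hKC (hiter n))
    have hlo : -M ≤ t - n * c := hmem.2.1
    have hhi : t - n * c ≤ M := hmem.2.2
    have ht1 : t ≤ |t| := le_abs_self t
    have ht2 : -|t| ≤ t := neg_abs_le t
    rcases abs_cases c with ⟨hce, -⟩ | ⟨hce, hcneg⟩
    · rw [hce] at hbig; nlinarith
    · rw [hce] at hbig; nlinarith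
  -- build g from the graph
  haveI : CompactSpace K := isCompact_iff_compactSpace.mp hKcomp
  have hbij : Function.Bijective (fun p : K => (p : X × ℝ).1) := by
    constructor
    · rintro ⟨⟨x1, t1⟩, h1⟩ ⟨⟨x2, t2⟩, h2⟩ hx
      simp only at hx
      subst hx
      exact Subtype.ext (Prod.ext rfl (hgraph x1 t1 t2 h1 h2))
    · intro x
      obtain ⟨t, ht⟩ := hfst x
      exact ⟨⟨(x, t), ht⟩, rfl⟩
  let e : K ≃ X := Equiv.ofBijective _ hbij
  have hecont : Continuous (e : K → X) := continuous_fst.comp continuous_subtype_val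
  let e' : K ≃ₜ X := hecont.homeoOfEquivCompactToT2
  set g : X → ℝ := fun x => ((e'.symm x : K) : X × ℝ).2 with hgdef
  have hgc : Continuous g :=
    continuous_snd.comp (continuous_subtype_val.comp e'.symm.continuous)
  have hgK : ∀ x, (x, g x) ∈ K := by
    intro x
    have h1 : ((e'.symm x : K) : X × ℝ).1 = x := e'.apply_symm_apply x
    have h2 : ((e'.symm x : K) : X × ℝ) = (x, g x) := Prod.ext h1 rfl
    rw [← h2]
    exact (e'.symm x).2
  refine ⟨fun x => -g x, hgc.neg, fun x => ?_⟩
  have h1 : (T x, g x + f x) ∈ K := hKinv (hgK x)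
  have h2 : (T x, g (T x)) ∈ K := hgK (T x)
  have := hgraph (T x) _ _ h1 h2
  show f x = -g x - -g (T x)
  linarith
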